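/- Let L be a finite ranked atomic geometric meet semi-lattice, let k be a field of characteristic 2, and let ⋀L = ⋀V / I_L be the quotient of the exterior algebra on the k-vector space V with basis {e_u : u atom of L} by the ideal I_L = I_1 + I_2 + I_3. Then the dimension of the degree-i graded component of ⋀L equals the number of elements of L of rank i. -/

import Mathlib

/-- The rank function is compatible with the covering relation. -/
def CoverRank {P : Type*} [PartialOrder P] (rk : P → ℕ) : Prop :=
  ∀ a b : P, a ⋖ b → rk b = rk a + 1

/-- The rank function is strictly monotone (the poset is graded). -/
def RankStrictMono {P : Type*} [PartialOrder P] (rk : P → ℕ) : Prop :=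
  ∀ a b : P, a < b → rk a < rk b

/-- The diamond property: every interval of rank 2 contains at least two
intermediate elements. -/
def DiamondProp {P : Type*} [PartialOrder P] (rk : P → ℕ) : Prop :=
  ∀ x y : P, x < y → rk y = rk x + 2 →
    ∃ a b : P, a ≠ b ∧ a ∈ Set.Ioo x y ∧ b ∈ Set.Ioo x y

/-- The parallelogram property (Definition of the paper): for every `x̂` and every
`y > x̂`, if the chain `x̂ = x 0 ⋖ x 1 ⋖ ... ⋖ x r` (`r > 0`) equals the closed
interval `[x̂, x r]`, is maximal w.r.t. inclusion among chain-intervals above `x̂`,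
and `r` is less than the rank of `y` in `P(x̂)`, then whenever `x i < y` and
`x (i+1) ≰ y` for some `0 < i ≤ r` (interpreting, for `i = r`, the latter as
`[x̂, y]` is not a chain), there exists `y'` with `x̂ ≤ y'`, `y' ⋖ y`,
`x (i-1) < y'` and `¬ x i ≤ y'`. -/
def ParallelogramProp {P : Type*} [PartialOrder P] (rk : P → ℕ) : Prop :=
  ∀ (xh y : P) (r : ℕ) (x : ℕ → P),
    xh < y → 0 < r → x 0 = xh →
    (∀ j, j < r → x j ⋖ x (j + 1)) →
    Set.Icc xh (x r) = {p | ∃ j ≤ r, p = x j} →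
    (∀ z : P, x r < z → ¬ IsChain (· ≤ ·) (Set.Icc xh z)) →
    r < rk y - rk xh →
    ∀ i, 0 < i → i ≤ r → x i < y →
      ((i < r ∧ ¬ x (i + 1) ≤ y) ∨ (i = r ∧ ¬ IsChain (· ≤ ·) (Set.Icc xh y))) →
      ∃ y' : P, xh ≤ y' ∧ y' ⋖ y ∧ x (i - 1) < y' ∧ ¬ x i ≤ y'

/-- Atomic: every element is the join of the atoms (rank-1 elements) below it. -/
def AtomicRk {L : Type*} [PartialOrder L] (rk : L → ℕ) : Prop :=
  ∀ l : L, IsLUB {a : L | rk a = 1 ∧ a ≤ l} l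

set_option linter.unusedSectionVars false


namespace EFR

variable {k : Type*} [Field k] {α : Type*} [Fintype α] [DecidableEq α]

/-- wedge product of a list of basis indices -/
noncomputable def W (l : List α) : ExteriorAlgebra k (α → k) :=
  (l.map fun a => ExteriorAlgebra.ι k (Pi.single a (1 : k))).prod

/-- wedge monomial of a finset -/
noncomputable def E (S : Finset α) : ExteriorAlgebra k (α → k) := W S.toList

lemma two_eq_zero (hchar : ringChar k = 2) : (2 : k) = 0 := by
  have := ringChar.Nat.cast_ringChar (R := k)
  rw [hchar] at this
  exact_mod_cast this

lemma neg_eq_self (hchar : ringChar k = 2) (x : ExteriorAlgebra k (α → k)) : -x = x := by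
  have h : x + x = 0 := by
    have : (2 : k) • x = 0 := by rw [two_eq_zero hchar, zero_smul]
    rwa [two_smul] at this
  have := neg_eq_of_add_eq_zero_left h
  exact this.symm ▸ rfl

lemma ι_comm (hchar : ringChar k = 2) (u v : α → k) :
    ExteriorAlgebra.ι k u * ExteriorAlgebra.ι k v
      = ExteriorAlgebra.ι k v * ExteriorAlgebra.ι k u := by
  have h := ExteriorAlgebra.ι_sq_zero (R := k) (u + v)
  rw [map_add, add_mul, mul_add, mul_add, ExteriorAlgebra.ι_sq_zero,
    ExteriorAlgebra.ι_sq_zero, zero_add, add_zero] at h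
  have := neg_eq_of_add_eq_zero_left h
  rw [← this, neg_eq_self hchar]

lemma commute_ι (hchar : ringChar k = 2) (u v : α → k) :
    Commute (ExteriorAlgebra.ι k u) (ExteriorAlgebra.ι k v) := ι_comm hchar u v

lemma W_perm (hchar : ringChar k = 2) {l l' : List α} (h : l.Perm l') :
    W (k := k) l = W l' := by
  refine List.Perm.prod_eq' (h.map _) ?_
  rw [List.pairwise_map]
  exact List.pairwise_iff_forall_sublist.mpr fun _ => commute_ι hchar _ _

lemma W_append (l l' : List α) : W (k := k) (l ++ l') = W l * W l' := by
  simp [W, List.prod_append]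

lemma W_cons (a : α) (l : List α) :
    W (k := k) (a :: l) = ExteriorAlgebra.ι k (Pi.single a (1 : k)) * W l := by
  simp [W]

lemma W_eq_zero_of_not_nodup (hchar : ringChar k = 2) :
    ∀ {l : List α}, ¬ l.Nodup → W (k := k) l = 0 := by
  intro l
  induction l with
  | nil => intro h; exact absurd List.nodup_nil h
  | cons a t ih =>
    intro h
    rw [List.nodup_cons] at h
    push_neg at h
    rw [W_cons]
    by_cases ha : a ∈ t
    · have hperm : t.Perm (a :: t.erase a) := List.perm_cons_erase ha
      rw [W_perm hchar hperm, W_cons, ← mul_assoc, ExteriorAlgebra.ι_sq_zero, zero_mul]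
    · rw [ih (h ha), mul_zero]

lemma E_empty : E (k := k) (∅ : Finset α) = 1 := by simp [E, W]

lemma E_mul_E (hchar : ringChar k = 2) (S T : Finset α) :
    E (k := k) S * E T = if Disjoint S T then E (S ∪ T) else 0 := by
  rw [E, E, ← W_append]
  split_ifs with h
  · refine W_perm hchar ?_
    rw [List.perm_ext_iff_of_nodup
      (List.Nodup.append S.nodup_toList T.nodup_toList ?_) (S ∪ T).nodup_toList]
    · intro a; simp [Finset.mem_toList, Finset.mem_union]
    · intro a haS haT
      rw [Finset.mem_toList] at haS haT
      exact (Finset.disjoint_left.mp h haS) haT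
  · refine W_eq_zero_of_not_nodup hchar ?_
    intro hnd
    rw [Finset.not_disjoint_iff] at h
    obtain ⟨a, haS, haT⟩ := h
    have hd := (List.nodup_append.mp hnd).2.2
    exact hd _ (Finset.mem_toList.2 haS) _ (Finset.mem_toList.2 haT) rfl

lemma E_insert (hchar : ringChar k = 2) {a : α} {S : Finset α} (ha : a ∉ S) :
    E (k := k) (insert a S) = ExteriorAlgebra.ι k (Pi.single a (1 : k)) * E S := by
  have h1 : E (k := k) {a} = ExteriorAlgebra.ι k (Pi.single a (1 : k)) := by
    simp [E, W]
  rw [← h1, E_mul_E hchar, if_pos (by simpa using ha)]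
  congr 1

lemma pi_single_sum (v : α → k) : v = ∑ a : α, v a • (Pi.single a (1 : k) : α → k) := by
  refine (pi_eq_sum_univ v).trans (Finset.sum_congr rfl fun a _ => ?_)
  congr 1
  ext j
  simp [Pi.single_apply, eq_comm]

lemma span_mul_closed (hchar : ringChar k = 2) :
    ∀ x ∈ Submodule.span k (Set.range (E (k := k) (α := α))),
    ∀ y ∈ Submodule.span k (Set.range (E (k := k) (α := α))),
      x * y ∈ Submodule.span k (Set.range (E (k := k) (α := α))) := by
  intro x hx y hy
  induction hx, hy using Submodule.span_induction₂ with
  | mem_mem u v hu hv =>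
    obtain ⟨S, rfl⟩ := hu
    obtain ⟨T, rfl⟩ := hv
    rw [E_mul_E hchar]
    split_ifs
    · exact Submodule.subset_span ⟨S ∪ T, rfl⟩
    · exact Submodule.zero_mem _
  | zero_left y hy => rw [zero_mul]; exact Submodule.zero_mem _
  | zero_right x hx => rw [mul_zero]; exact Submodule.zero_mem _
  | add_left x y z hx hy hz h1 h2 => rw [add_mul]; exact Submodule.add_mem _ h1 h2
  | add_right x y z hx hy hz h1 h2 => rw [mul_add]; exact Submodule.add_mem _ h1 h2
  | smul_left r x y hx hy h => rw [smul_mul_assoc]; exact Submodule.smul_mem _ _ h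
  | smul_right r x y hx hy h => rw [mul_smul_comm]; exact Submodule.smul_mem _ _ h

lemma ι_mem_span :
    ∀ v : α → k, ExteriorAlgebra.ι k v ∈ Submodule.span k (Set.range (E (k := k) (α := α))) := by
  intro v
  have hv : v = ∑ a : α, v a • (Pi.single a (1 : k) : α → k) := pi_single_sum v
  rw [hv, map_sum]
  refine Submodule.sum_mem _ fun a _ => ?_
  rw [map_smul]
  refine Submodule.smul_mem _ _ (Submodule.subset_span ⟨{a}, ?_⟩)
  simp [E, W]

lemma span_range_E (hchar : ringChar k = 2) :
    Submodule.span k (Set.range (E (k := k) (α := α))) = ⊤ := by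
  rw [eq_top_iff]
  rintro x -
  induction x using ExteriorAlgebra.induction with
  | algebraMap r =>
    rw [Algebra.algebraMap_eq_smul_one]
    refine Submodule.smul_mem _ _ (Submodule.subset_span ⟨∅, E_empty⟩)
  | ι v => exact ι_mem_span v
  | mul x y hx hy => exact span_mul_closed hchar x hx y hy
  | add x y hx hy => exact Submodule.add_mem _ hx hy

lemma pow_range_ι (hchar : ringChar k = 2) (i : ℕ) :
    (LinearMap.range (ExteriorAlgebra.ι k : (α → k) →ₗ[k] ExteriorAlgebra k (α → k))) ^ i
      = Submodule.span k {x | ∃ S : Finset α, S.card = i ∧ x = E S} := by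
  induction i with
  | zero =>
    rw [pow_zero]
    have : {x | ∃ S : Finset α, S.card = 0 ∧ x = E (k := k) S} = {1} := by
      ext x
      constructor
      · rintro ⟨S, hS, rfl⟩
        rw [Finset.card_eq_zero] at hS
        subst hS
        exact E_empty
      · rintro rfl
        exact ⟨∅, rfl, E_empty.symm⟩
    rw [this]
    exact Submodule.one_eq_span
  | succ n ih =>
    apply le_antisymm
    · rw [pow_succ']
      refine Submodule.mul_le.mpr ?_
      rintro m ⟨v, rfl⟩ x hx
      rw [ih] at hx
      induction hx using Submodule.span_induction with
      | mem u hu =>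
        obtain ⟨S, hScard, rfl⟩ := hu
        have hv : v = ∑ a : α, v a • (Pi.single a (1 : k) : α → k) := pi_single_sum v
        rw [hv, map_sum, Finset.sum_mul]
        refine Submodule.sum_mem _ fun a _ => ?_
        rw [map_smul, smul_mul_assoc]
        refine Submodule.smul_mem _ _ ?_
        by_cases ha : a ∈ S
        · have h1 : E (k := k) {a} = ExteriorAlgebra.ι k (Pi.single a (1 : k)) := by
            simp [E, W]
          rw [← h1, E_mul_E hchar, if_neg (by simpa using ha)]
          exact Submodule.zero_mem _
        · rw [← E_insert hchar ha]
          exact Submodule.subset_span ⟨insert a S, by rw [Finset.card_insert_of_notMem ha, hScard], rfl⟩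
      | zero => rw [mul_zero]; exact Submodule.zero_mem _
      | add x y hx hy h1 h2 => rw [mul_add]; exact Submodule.add_mem _ h1 h2
      | smul r x hx h => rw [mul_smul_comm]; exact Submodule.smul_mem _ _ h
    · rw [Submodule.span_le]
      rintro x ⟨S, hScard, rfl⟩
      have hS : S.Nonempty := Finset.card_pos.mp (by omega)
      obtain ⟨a, ha⟩ := hS
      have hrec : S = insert a (S.erase a) := (Finset.insert_erase ha).symm
      rw [hrec, E_insert hchar (Finset.notMem_erase a S), pow_succ']
      refine Submodule.mul_mem_mul (LinearMap.mem_range_self _ _) ?_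
      rw [ih]
      refine Submodule.subset_span ⟨S.erase a, ?_, rfl⟩
      rw [Finset.card_erase_of_mem ha, hScard]
      rfl

/-- the alternating-map family picking out the coefficient of `E S` -/
noncomputable def dualF (S : Finset α) : ∀ n, (α → k) [⋀^Fin n]→ₗ[k] k := fun n =>
  if h : n = S.toList.length then
    ((Matrix.detRowAlternating :
        (Fin S.toList.length → k) [⋀^Fin S.toList.length]→ₗ[k] k).compLinearMap
      (LinearMap.funLeft k k S.toList.get)).domDomCongr (finCongr h.symm)
  else 0

/-- the coefficient functional of the monomial `E S` -/
noncomputable def phiS (S : Finset α) : ExteriorAlgebra k (α → k) →ₗ[k] k :=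
  ExteriorAlgebra.liftAlternating (dualF S)

lemma E_eq_iotaMulti (T : Finset α) :
    E (k := k) T = ExteriorAlgebra.ιMulti k T.toList.length
      (fun i => Pi.single (T.toList.get i) (1 : k)) := by
  rw [ExteriorAlgebra.ιMulti_apply, E, W]
  congr 1
  have : (fun i : Fin T.toList.length =>
      ExteriorAlgebra.ι k (Pi.single (T.toList.get i) (1 : k)))
      = (fun a => ExteriorAlgebra.ι k (Pi.single a (1 : k))) ∘ T.toList.get := rfl
  rw [this, ← List.map_ofFn, List.ofFn_get]

lemma phiS_E (S T : Finset α) : phiS (k := k) S (E T) = if S = T then 1 else 0 := by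
  rw [E_eq_iotaMulti, phiS, ExteriorAlgebra.liftAlternating_apply_ιMulti]
  by_cases h : T.toList.length = S.toList.length
  · rw [dualF, dif_pos h]
    rw [AlternatingMap.domDomCongr_apply, AlternatingMap.compLinearMap_apply]
    by_cases hST : S = T
    · subst hST
      rw [if_pos rfl]
      have hm : (fun j => LinearMap.funLeft k k S.toList.get
          (((fun i => Pi.single (S.toList.get i) (1 : k)) ∘ (finCongr h.symm)) j))
          = (1 : Matrix (Fin S.toList.length) (Fin S.toList.length) k) := by
        funext j t
        have hcast : (finCongr h.symm) j = j := Fin.ext (by simp)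
        simp only [LinearMap.funLeft_apply, Function.comp_apply, Pi.single_apply,
          Matrix.one_apply, hcast]
        simp only [List.Nodup.get_inj_iff S.nodup_toList]
        by_cases hjt : j = t
        · rw [if_pos hjt.symm, if_pos hjt]
        · rw [if_neg (Ne.symm hjt), if_neg hjt]
      rw [hm]
      show (1 : Matrix (Fin S.toList.length) (Fin S.toList.length) k).det = 1
      exact Matrix.det_one
    · rw [if_neg hST]
      have hcard : S.card = T.card := by
        rw [← Finset.length_toList, ← Finset.length_toList, h]
      have hns : ¬ S ⊆ T := fun hsub => hST (Finset.eq_of_subset_of_card_le hsub hcard.ge)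
      obtain ⟨s, hsS, hsT⟩ := Finset.not_subset.mp hns
      have hmem : s ∈ S.toList := Finset.mem_toList.mpr hsS
      have hlt : S.toList.idxOf s < S.toList.length := List.idxOf_lt_length_iff.mpr hmem
      have hget : S.toList.get ⟨S.toList.idxOf s, hlt⟩ = s := List.idxOf_get hlt
      apply Matrix.det_eq_zero_of_column_eq_zero ⟨S.toList.idxOf s, hlt⟩
      intro j
      simp only [LinearMap.funLeft_apply, Function.comp_apply, Pi.single_apply, hget]
      rw [if_neg]
      intro hc
      exact hsT (Finset.mem_toList.mp (hc ▸ List.get_mem _ _))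
  · rw [dualF, dif_neg h, if_neg (fun hST => h (by rw [hST])), AlternatingMap.zero_apply]






section Lattice
variable {L : Type*} [SemilatticeInf L] [OrderBot L] [Fintype L]

lemma exists_isLUB_of_bddAbove {X : Set L} (h : BddAbove X) : ∃ m, IsLUB X m := by
  classical
  obtain ⟨u, hu⟩ := h
  set F : Finset L := Finset.univ.filter (· ∈ upperBounds X) with hF
  have hne : F.Nonempty := ⟨u, by simp [hF, hu]⟩
  refine ⟨F.inf' hne id, ?_, ?_⟩
  · intro x hx
    exact Finset.le_inf' hne id fun b hb => (Finset.mem_filter.mp hb).2 hx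
  · intro b hb
    exact Finset.inf'_le id (by simp [hF, hb])

variable {rk : L → ℕ}

lemma exists_rep [DecidableEq L] (h0 : rk ⊥ = 0) (hc : CoverRank rk)
    (hm : RankStrictMono rk) (hat : AtomicRk rk) (l : L) :
    ∃ S : Finset {a : L // rk a = 1},
      IsLUB (Subtype.val '' (↑S : Set {a : L // rk a = 1})) l ∧ S.card = rk l := by
  suffices H : ∀ n, ∀ l : L, rk l = n → ∃ S : Finset {a : L // rk a = 1},
      IsLUB (Subtype.val '' (↑S : Set {a : L // rk a = 1})) l ∧ S.card = n by
    obtain ⟨S, h1, h2⟩ := H (rk l) l rfl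
    exact ⟨S, h1, h2⟩
  intro n
  induction n using Nat.strong_induction_on with
  | _ n ih =>
    intro l hl
    rcases n with _ | n
    · have hbot : l = ⊥ := by
        by_contra hne
        have := hm ⊥ l (bot_lt_iff_ne_bot.mpr hne)
        omega
      subst hbot
      refine ⟨∅, ?_, rfl⟩
      simpa using isLUB_empty
    · -- find a maximal element strictly below l
      have hlne : l ≠ ⊥ := fun hb => by rw [hb, h0] at hl; omega
      obtain ⟨l', hl'mem, hl'max⟩ := Set.Finite.exists_maximalFor id {x : L | x < l}
        (Set.toFinite _) ⟨⊥, bot_lt_iff_ne_bot.mpr hlne⟩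
      simp only [Set.mem_setOf_eq, id] at hl'mem hl'max
      have hcov : l' ⋖ l := by
        refine ⟨hl'mem, fun c h1 h2 => ?_⟩
        have := hl'max h2 h1.le
        exact absurd (lt_of_lt_of_le h1 this) (lt_irrefl l')
      have hrk' : rk l' = n := by have := hc l' l hcov; omega
      obtain ⟨S', hS'lub, hS'card⟩ := ih n (by omega) l' hrk'
      -- find an atom below l but not below l'
      have hatom : ∃ a : {a : L // rk a = 1}, (a : L) ≤ l ∧ ¬ (a : L) ≤ l' := by
        by_contra hno
        push_neg at hno
        have hub : l' ∈ upperBounds {a : L | rk a = 1 ∧ a ≤ l} := by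
          rintro x ⟨hx1, hx2⟩
          exact hno ⟨x, hx1⟩ hx2
        exact absurd ((hat l).2 hub) hl'mem.not_ge
      obtain ⟨a, hal, hal'⟩ := hatom
      have haS' : a ∉ S' := fun hmem =>
        hal' (hS'lub.1 ⟨a, by simpa using hmem, rfl⟩)
      refine ⟨insert a S', ⟨?_, ?_⟩, by rw [Finset.card_insert_of_notMem haS', hS'card]⟩
      · rintro x ⟨b, hb, rfl⟩
        simp only [Finset.coe_insert, Set.mem_insert_iff, Finset.mem_coe] at hb
        rcases hb with rfl | hb
        · exact hal
        · exact le_trans (hS'lub.1 ⟨b, by simpa using hb, rfl⟩) hl'mem.le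
      · intro u hu
        have hl'u : l' ≤ u := hS'lub.2 fun x ⟨b, hb, hxe⟩ =>
          hu ⟨b, by simp [Finset.mem_coe.mp hb], hxe⟩
        have hau : (a : L) ≤ u := hu ⟨a, by simp, rfl⟩
        have h1 : l' ≤ u ⊓ l := le_inf hl'u hl'mem.le
        have h2 : (a : L) ≤ u ⊓ l := le_inf hau hal
        have hne2 : u ⊓ l ≠ l' := fun he => hal' (he ▸ h2)
        have hlt : l' < u ⊓ l := lt_of_le_of_ne h1 (Ne.symm hne2)
        have heq : u ⊓ l = l := by
          rcases lt_or_eq_of_le (inf_le_right : u ⊓ l ≤ l) with h | h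
          · exact absurd h (hcov.2 hlt)
          · exact h
        calc l = u ⊓ l := heq.symm
          _ ≤ u := inf_le_left

lemma rk_lub_union [DecidableEq L]
    (hgeo : ∀ x y j : L, IsLUB ({x, y} : Set L) j → rk (x ⊓ y) + rk j ≤ rk x + rk y)
    {S D : Finset {a : L // rk a = 1}} {l m : L}
    (hS : IsLUB (Subtype.val '' (↑S : Set {a : L // rk a = 1})) l)
    (hm' : IsLUB (Subtype.val '' (↑(S ∪ D) : Set {a : L // rk a = 1})) m) :
    rk m ≤ rk l + D.card := by
  induction D using Finset.induction_on generalizing m with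
  | empty =>
    rw [Finset.union_empty] at hm'
    rw [hm'.unique hS]
    simp
  | @insert a D ha ih =>
    rw [Finset.union_insert] at hm'
    have hsub : Subtype.val '' (↑(S ∪ D) : Set {a : L // rk a = 1})
        ⊆ Subtype.val '' (↑(insert a (S ∪ D)) : Set {a : L // rk a = 1}) := by
      apply Set.image_mono
      intro x hx
      simp only [Finset.coe_insert, Set.mem_insert_iff]
      exact Or.inr hx
    obtain ⟨m', hm'lub⟩ := exists_isLUB_of_bddAbove ⟨m, fun x hx => hm'.1 (hsub hx)⟩
    have hih : rk m' ≤ rk l + D.card := ih hm'lub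
    have hpair : IsLUB ({m', (a : L)} : Set L) m := by
      constructor
      · rintro x (rfl | rfl)
        · exact hm'lub.2 fun y hy => hm'.1 (hsub hy)
        · exact hm'.1 ⟨a, by simp, rfl⟩
      · intro u hu
        have hm'u : m' ≤ u := hu (Set.mem_insert _ _)
        have hau : (a : L) ≤ u := hu (Set.mem_insert_of_mem _ rfl)
        apply hm'.2
        rintro x ⟨b, hb, rfl⟩
        simp only [Finset.coe_insert, Set.mem_insert_iff, Finset.mem_coe] at hb
        rcases hb with rfl | hb
        · exact hau
        · exact le_trans (hm'lub.1 ⟨b, by simpa using hb, rfl⟩) hm'u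
    have hg := hgeo m' (a : L) m hpair
    have hra : rk (a : L) = 1 := a.2
    rw [Finset.card_insert_of_notMem ha]
    omega

lemma rk_lub_le [DecidableEq L] (h0 : rk ⊥ = 0)
    (hgeo : ∀ x y j : L, IsLUB ({x, y} : Set L) j → rk (x ⊓ y) + rk j ≤ rk x + rk y)
    {S : Finset {a : L // rk a = 1}} {m : L}
    (hm' : IsLUB (Subtype.val '' (↑S : Set {a : L // rk a = 1})) m) :
    rk m ≤ S.card := by
  have hbot : IsLUB (Subtype.val '' (↑(∅ : Finset {a : L // rk a = 1})
      : Set {a : L // rk a = 1})) (⊥ : L) := by simpa using isLUB_empty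
  have h2 : IsLUB (Subtype.val '' (↑((∅ : Finset {a : L // rk a = 1}) ∪ S)
      : Set {a : L // rk a = 1})) m := by rw [Finset.empty_union]; exact hm'
  have h3 := rk_lub_union hgeo (S := ∅) (D := S) hbot h2
  rw [h0] at h3
  omega

end Lattice



set_option maxHeartbeats 1000000 in
theorem main {L : Type*} [SemilatticeInf L] [OrderBot L] [Fintype L] [DecidableEq L]
    (rk : L → ℕ) (h0 : rk ⊥ = 0) (hc : CoverRank rk) (hm : RankStrictMono rk)
    (hat : AtomicRk rk)
    (hgeo : ∀ x y j : L, IsLUB ({x, y} : Set L) j → rk (x ⊓ y) + rk j ≤ rk x + rk y)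
    (k : Type*) [Field k] (hchar : ringChar k = 2) (i : ℕ) :
    Module.finrank k (Submodule.map
      (Submodule.span k {x : ExteriorAlgebra k ({a : L // rk a = 1} → k) |
        ∃ g ∈ ({x | ∃ S : Finset {a : L // rk a = 1},
              (¬ ∃ l : L, IsLUB (Subtype.val '' (↑S : Set {a : L // rk a = 1})) l) ∧
              x = E S} ∪
            {x | ∃ S : Finset {a : L // rk a = 1},
              (∃ l : L, IsLUB (Subtype.val '' (↑S : Set {a : L // rk a = 1})) l ∧
                rk l ≠ S.card) ∧ x = E S} ∪
            {x | ∃ S T : Finset {a : L // rk a = 1}, S ≠ T ∧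
              (∃ l : L, IsLUB (Subtype.val '' (↑S : Set {a : L // rk a = 1})) l ∧
                IsLUB (Subtype.val '' (↑T : Set {a : L // rk a = 1})) l ∧
                rk l = S.card ∧ S.card = T.card) ∧ x = E S - E T}),
          ∃ w w' : ExteriorAlgebra k ({a : L // rk a = 1} → k), x = w * g * w'}).mkQ
      (LinearMap.range (ExteriorAlgebra.ι k : ({a : L // rk a = 1} → k) →ₗ[k]
          ExteriorAlgebra k ({a : L // rk a = 1} → k)) ^ i)) =
      Nat.card {l : L | rk l = i} := by
  classical
  -- abbreviations
  set A := {a : L // rk a = 1} with hA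
  set jn : Finset A → L → Prop := fun S l =>
    IsLUB (Subtype.val '' (↑S : Set A)) l with hjndef
  -- the chosen representative independent sets
  choose rep hrep1 hrep2 using fun l : L => exists_rep h0 hc hm hat l
  have hrepinj : ∀ l l' : L, rep l = rep l' → l = l' := fun l l' h =>
    (hrep1 l).unique (h ▸ hrep1 l')
  -- join basics
  have hsubjoin : ∀ {S C : Finset A} {m : L}, S ⊆ C → jn C m → ∃ l, jn S l := by
    intro S C m hsub hCm
    exact exists_isLUB_of_bddAbove
      ⟨m, fun x hx => hCm.1 (Set.image_mono (Finset.coe_subset.mpr hsub) hx)⟩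
  have hub : ∀ {S D : Finset A} {l u : L}, jn S l →
      (u ∈ upperBounds (Subtype.val '' (↑(S ∪ D) : Set A)) ↔
        l ≤ u ∧ u ∈ upperBounds (Subtype.val '' (↑D : Set A))) := by
    intro S D l u hSl
    constructor
    · intro h
      constructor
      · refine hSl.2 ?_
        rintro x ⟨b, hb, rfl⟩
        exact h ⟨b, by simp [Finset.mem_coe.mp hb], rfl⟩
      · rintro x ⟨b, hb, rfl⟩
        exact h ⟨b, by simp [Finset.mem_coe.mp hb], rfl⟩
    · rintro ⟨h1, h2⟩ x ⟨b, hb, rfl⟩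
      rcases Finset.mem_union.mp (Finset.mem_coe.mp hb) with hbS | hbD
      · exact le_trans (hSl.1 ⟨b, hbS, rfl⟩) h1
      · exact h2 ⟨b, hbD, rfl⟩
  have hjn_transfer : ∀ {S T D : Finset A} {l m : L}, jn S l → jn T l →
      jn (S ∪ D) m → jn (T ∪ D) m := by
    intro S T D l m hSl hTl hmm
    constructor
    · exact (hub hTl).mpr ((hub hSl).mp hmm.1)
    · intro u hu
      exact hmm.2 ((hub hSl).mpr ((hub hTl).mp hu))
  -- the retraction target
  set target : Finset A → ExteriorAlgebra k (A → k) := fun S =>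
    if h : ∃ l : L, jn S l ∧ rk l = S.card then E (rep h.choose) else 0 with htargetdef
  have target_eq : ∀ {S : Finset A} {l : L}, jn S l → rk l = S.card →
      target S = E (rep l) := by
    intro S l h1 h2
    have hex : ∃ l : L, jn S l ∧ rk l = S.card := ⟨l, h1, h2⟩
    have : target S = E (rep hex.choose) := dif_pos hex
    rw [this, (hex.choose_spec.1).unique h1]
  have target_none : ∀ {S : Finset A}, ¬ (∃ l : L, jn S l ∧ rk l = S.card) →
      target S = 0 := fun h => dif_neg h
  have hdep : ∀ {C : Finset A} {m : L}, jn C m → rk m ≠ C.card → target C = 0 := by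
    intro C m hjm hne
    refine target_none ?_
    rintro ⟨l', h1', h2'⟩
    exact hne ((h1'.unique hjm) ▸ h2')
  -- the retraction
  set Φ : ExteriorAlgebra k (A → k) →ₗ[k] ExteriorAlgebra k (A → k) :=
    ∑ S : Finset A, (LinearMap.toSpanSingleton k _ (target S)).comp (phiS S) with hPhidef
  have Φ_E : ∀ T : Finset A, Φ (E T) = target T := by
    intro T
    rw [hPhidef]
    rw [LinearMap.sum_apply]
    have : ∀ S : Finset A,
        ((LinearMap.toSpanSingleton k _ (target S)).comp (phiS S)) (E T)
          = if S = T then target S else 0 := by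
      intro S
      rw [LinearMap.comp_apply, phiS_E, LinearMap.toSpanSingleton_apply]
      split_ifs
      · rw [one_smul]
      · rw [zero_smul]
    rw [Finset.sum_congr rfl fun S _ => this S]
    rw [Finset.sum_ite_eq' Finset.univ T target, if_pos (Finset.mem_univ T)]
  -- triple product
  have htriple : ∀ T S T' : Finset A, (E T : ExteriorAlgebra k (A → k)) * E S * E T' =
      if Disjoint T S ∧ Disjoint (T ∪ S) T' then E (T ∪ S ∪ T') else 0 := by
    intro T S T'
    rw [E_mul_E hchar]
    by_cases h1 : Disjoint T S
    · rw [if_pos h1, E_mul_E hchar]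
      by_cases h2 : Disjoint (T ∪ S) T'
      · rw [if_pos h2, if_pos ⟨h1, h2⟩]
      · rw [if_neg h2, if_neg (fun hh => h2 hh.2)]
    · rw [if_neg h1, zero_mul, if_neg (fun hh => h1 hh.1)]
  -- key vanishing lemma for the third family
  have hkey3 : ∀ (S₁ S₂ D : Finset A) (l m : L), jn S₁ l → jn S₂ l → rk l = S₂.card →
      Disjoint S₂ D → (∃ x, x ∈ S₁ ∧ x ∈ D) → jn (S₂ ∪ D) m → rk m ≠ (S₂ ∪ D).card := by
    intro S₁ S₂ D l m h1 h2 hrkl hdisj ⟨x, hxS₁, hxD⟩ hjm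
    have hjm1 : jn (S₁ ∪ D) m := hjn_transfer h2 h1 hjm
    have hre : S₁ ∪ D = S₁ ∪ (D \ S₁) := (Finset.union_sdiff_self_eq_union).symm
    have hjm2 : jn (S₁ ∪ (D \ S₁)) m := hre ▸ hjm1
    have hb1 : rk m ≤ rk l + (D \ S₁).card := rk_lub_union hgeo h1 hjm2
    have hlt : (D \ S₁).card < D.card := by
      refine Finset.card_lt_card ?_
      rw [Finset.ssubset_iff_of_subset (Finset.sdiff_subset)]
      exact ⟨x, hxD, by simp [hxS₁]⟩
    have hcard : (S₂ ∪ D).card = S₂.card + D.card := Finset.card_union_of_disjoint hdisj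
    omega
  -- vanishing of Φ on the ideal generators, monomial by monomial
  set gens : Set (ExteriorAlgebra k (A → k)) :=
    ({x | ∃ S : Finset A, (¬ ∃ l : L, jn S l) ∧ x = E S} ∪
     {x | ∃ S : Finset A, (∃ l : L, jn S l ∧ rk l ≠ S.card) ∧ x = E S} ∪
     {x | ∃ S T : Finset A, S ≠ T ∧
        (∃ l : L, jn S l ∧ jn T l ∧ rk l = S.card ∧ S.card = T.card) ∧
        x = E S - E T}) with hgensdef
  have hkey : ∀ g ∈ gens, ∀ T T' : Finset A, Φ (E T * g * E T') = 0 := by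
    intro g hg T T'
    rw [hgensdef] at hg
    rcases hg with (⟨S, hbad, rfl⟩ | ⟨S, hbad, rfl⟩) | ⟨S, S', hne, hex, rfl⟩
    · -- no join at all
      rw [htriple]
      split_ifs with hd
      · rw [Φ_E]
        apply target_none
        rintro ⟨m, hjnm, -⟩
        refine hbad (hsubjoin ?_ hjnm)
        intro x hx
        simp only [Finset.mem_union]
        exact Or.inl (Or.inr hx)
      · exact map_zero Φ
    · -- join exists but rank defect
      obtain ⟨l, hSl, hrkl⟩ := hbad
      rw [htriple]
      split_ifs with hd
      · rw [Φ_E]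
        obtain ⟨hd1, hd2⟩ := hd
        have hre : T ∪ S ∪ T' = S ∪ (T ∪ T') := by
          ext x; simp only [Finset.mem_union]; tauto
        by_cases hexm : ∃ m, jn (T ∪ S ∪ T') m
        · obtain ⟨m, hjm⟩ := hexm
          refine hdep hjm ?_
          have hjm2 : jn (S ∪ (T ∪ T')) m := hre ▸ hjm
          have h1 : rk m ≤ rk l + (T ∪ T').card := rk_lub_union hgeo hSl hjm2
          have h2 : rk l ≤ S.card := rk_lub_le h0 hgeo hSl
          have h3 : rk l < S.card := lt_of_le_of_ne h2 hrkl
          have hdisj : Disjoint S (T ∪ T') := by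
            rw [Finset.disjoint_union_right]
            exact ⟨hd1.symm, (Finset.disjoint_union_left.mp hd2).2⟩
          have hcard : (T ∪ S ∪ T').card = S.card + (T ∪ T').card := by
            rw [hre, Finset.card_union_of_disjoint hdisj]
          omega
        · exact target_none fun hx => hexm ⟨hx.choose, hx.choose_spec.1⟩
      · exact map_zero Φ
    · -- two independent sets with the same join
      obtain ⟨l, hSl, hS'l, hrkS, hcards⟩ := hex
      have hsplit : (E T : ExteriorAlgebra k (A → k)) * (E S - E S') * E T'
          = E T * E S * E T' - E T * E S' * E T' := by rw [mul_sub, sub_mul]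
      rw [hsplit, map_sub, htriple T S T', htriple T S' T']
      have hreS : T ∪ S ∪ T' = S ∪ (T ∪ T') := by
        ext x; simp only [Finset.mem_union]; tauto
      have hreS' : T ∪ S' ∪ T' = S' ∪ (T ∪ T') := by
        ext x; simp only [Finset.mem_union]; tauto
      split_ifs with h1 h2 h2
      · -- both products survive
        rw [Φ_E, Φ_E]
        have hdisjS : Disjoint S (T ∪ T') := by
          rw [Finset.disjoint_union_right]
          exact ⟨h1.1.symm, (Finset.disjoint_union_left.mp h1.2).2⟩
        have hdisjS' : Disjoint S' (T ∪ T') := by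
          rw [Finset.disjoint_union_right]
          exact ⟨h2.1.symm, (Finset.disjoint_union_left.mp h2.2).2⟩
        have hcardeq : (T ∪ S ∪ T').card = (T ∪ S' ∪ T').card := by
          rw [hreS, hreS', Finset.card_union_of_disjoint hdisjS,
            Finset.card_union_of_disjoint hdisjS', hcards]
        rw [sub_eq_zero]
        by_cases hexm : ∃ m, jn (T ∪ S ∪ T') m
        · obtain ⟨m, hjm⟩ := hexm
          have hjm2 : jn (S ∪ (T ∪ T')) m := hreS ▸ hjm
          have hjm2' : jn (S' ∪ (T ∪ T')) m := hjn_transfer hSl hS'l hjm2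
          have hjm' : jn (T ∪ S' ∪ T') m := hreS' ▸ hjm2'
          by_cases hrkm : rk m = (T ∪ S ∪ T').card
          · rw [target_eq hjm hrkm, target_eq hjm' (hcardeq ▸ hrkm)]
          · rw [hdep hjm hrkm, hdep hjm' (hcardeq ▸ hrkm)]
        · rw [target_none fun hx => hexm ⟨hx.choose, hx.choose_spec.1⟩]
          refine (target_none fun hx => ?_).symm
          obtain ⟨m, hjnm, -⟩ := hx
          have hjm2' : jn (S' ∪ (T ∪ T')) m := hreS' ▸ hjnm
          have hjm2 : jn (S ∪ (T ∪ T')) m := hjn_transfer hS'l hSl hjm2'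
          exact hexm ⟨m, hreS.symm ▸ hjm2⟩
      · -- only the S-product survives
        rw [map_zero, sub_zero, Φ_E]
        have hdisjS : Disjoint S (T ∪ T') := by
          rw [Finset.disjoint_union_right]
          exact ⟨h1.1.symm, (Finset.disjoint_union_left.mp h1.2).2⟩
        have hTT' : Disjoint T T' := (Finset.disjoint_union_left.mp h1.2).1
        have hx : ∃ x, x ∈ S' ∧ x ∈ T ∪ T' := by
          by_contra hno
          push_neg at hno
          refine h2 ⟨?_, ?_⟩
          · rw [Finset.disjoint_right]
            intro x hxS'
            exact fun hxT => hno x hxS' (Finset.mem_union_left _ hxT)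
          · rw [Finset.disjoint_left]
            rintro x hxTS' hxT'
            rcases Finset.mem_union.mp hxTS' with hxT | hxS'
            · exact (Finset.disjoint_left.mp hTT' hxT) hxT'
            · exact hno x hxS' (Finset.mem_union_right _ hxT')
        by_cases hexm : ∃ m, jn (T ∪ S ∪ T') m
        · obtain ⟨m, hjm⟩ := hexm
          refine hdep hjm ?_
          have hjm2 : jn (S ∪ (T ∪ T')) m := hreS ▸ hjm
          have := hkey3 S' S (T ∪ T') l m hS'l hSl hrkS hdisjS hx hjm2
          intro hcon
          refine this ?_
          rw [← hreS]
          exact hcon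
        · exact target_none fun hx => hexm ⟨hx.choose, hx.choose_spec.1⟩
      · -- only the S'-product survives
        rw [map_zero, zero_sub, neg_eq_zero, Φ_E]
        have hdisjS' : Disjoint S' (T ∪ T') := by
          rw [Finset.disjoint_union_right]
          exact ⟨h2.1.symm, (Finset.disjoint_union_left.mp h2.2).2⟩
        have hTT' : Disjoint T T' := (Finset.disjoint_union_left.mp h2.2).1
        have hrkS' : rk l = S'.card := hcards ▸ hrkS
        have hx : ∃ x, x ∈ S ∧ x ∈ T ∪ T' := by
          by_contra hno
          push_neg at hno
          refine h1 ⟨?_, ?_⟩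
          · rw [Finset.disjoint_right]
            intro x hxS
            exact fun hxT => hno x hxS (Finset.mem_union_left _ hxT)
          · rw [Finset.disjoint_left]
            rintro x hxTS hxT'
            rcases Finset.mem_union.mp hxTS with hxT | hxS
            · exact (Finset.disjoint_left.mp hTT' hxT) hxT'
            · exact hno x hxS (Finset.mem_union_right _ hxT')
        by_cases hexm : ∃ m, jn (T ∪ S' ∪ T') m
        · obtain ⟨m, hjm⟩ := hexm
          refine hdep hjm ?_
          have hjm2 : jn (S' ∪ (T ∪ T')) m := hreS' ▸ hjm
          have := hkey3 S S' (T ∪ T') l m hSl hS'l hrkS' hdisjS' hx hjm2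
          intro hcon
          refine this ?_
          rw [← hreS']
          exact hcon
        · exact target_none fun hx => hexm ⟨hx.choose, hx.choose_spec.1⟩
      · simp
  -- Φ kills the ideal
  have hspanE := span_range_E (k := k) (α := A) hchar
  have hIker : Submodule.span k {x : ExteriorAlgebra k (A → k) |
      ∃ g ∈ gens, ∃ w w' : ExteriorAlgebra k (A → k), x = w * g * w'} ≤ LinearMap.ker Φ := by
    rw [Submodule.span_le]
    rintro x ⟨g, hg, w, w', rfl⟩
    have hw : w ∈ Submodule.span k (Set.range (E (k := k) (α := A))) := by
      rw [hspanE]; exact Submodule.mem_top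
    have hw' : w' ∈ Submodule.span k (Set.range (E (k := k) (α := A))) := by
      rw [hspanE]; exact Submodule.mem_top
    rw [SetLike.mem_coe, LinearMap.mem_ker]
    induction hw, hw' using Submodule.span_induction₂ with
    | mem_mem u u' hu hu' =>
      obtain ⟨T, rfl⟩ := hu
      obtain ⟨T', rfl⟩ := hu'
      exact hkey g hg T T'
    | zero_left u' hu' => rw [zero_mul, zero_mul, map_zero]
    | zero_right u hu => rw [mul_zero, map_zero]
    | add_left x y z hx hy hz h1 h2 => rw [add_mul, add_mul, map_add, h1, h2, add_zero]
    | add_right x y z hx hy hz h1 h2 => rw [mul_add, map_add, h1, h2, add_zero]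
    | smul_left r x y hx hy h => rw [smul_mul_assoc, smul_mul_assoc, map_smul, h, smul_zero]
    | smul_right r x y hx hy h => rw [mul_smul_comm, map_smul, h, smul_zero]
  -- change the goal to the local names
  show Module.finrank k ↥(Submodule.map
      (Submodule.span k {x : ExteriorAlgebra k (A → k) |
        ∃ g ∈ gens, ∃ w w' : ExteriorAlgebra k (A → k), x = w * g * w'}).mkQ
      (LinearMap.range (ExteriorAlgebra.ι k : (A → k) →ₗ[k] ExteriorAlgebra k (A → k)) ^ i)) =
    Nat.card {l : L | rk l = i}
  set I : Submodule k (ExteriorAlgebra k (A → k)) :=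
    Submodule.span k {x : ExteriorAlgebra k (A → k) |
      ∃ g ∈ gens, ∃ w w' : ExteriorAlgebra k (A → k), x = w * g * w'} with hIdef
  rw [pow_range_ι hchar i, Submodule.map_span]
  set v : {l : L // rk l = i} → (ExteriorAlgebra k (A → k) ⧸ I) :=
    fun l => I.mkQ (E (rep l.1)) with hvdef
  have hmk0 : ∀ {x : ExteriorAlgebra k (A → k)}, x ∈ gens → I.mkQ x = 0 := by
    intro x hx
    rw [Submodule.mkQ_apply, Submodule.Quotient.mk_eq_zero]
    exact Submodule.subset_span ⟨x, hx, 1, 1, by rw [one_mul, mul_one]⟩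
  have hgood : ∀ {S : Finset A} {l : L}, jn S l → rk l = S.card →
      I.mkQ (E S) = I.mkQ (E (rep l)) := by
    intro S l hSl hrk
    by_cases hSrep : S = rep l
    · rw [hSrep]
    · have hgen : (E S - E (rep l) : ExteriorAlgebra k (A → k)) ∈ gens := by
        rw [hgensdef]
        exact Or.inr ⟨S, rep l, hSrep,
          ⟨l, hSl, hrep1 l, hrk, by rw [hrep2 l]; exact hrk.symm⟩, rfl⟩
      have h00 : I.mkQ (E S - E (rep l)) = 0 := hmk0 hgen
      rw [map_sub] at h00
      exact sub_eq_zero.mp h00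
  have hspans : Submodule.span k (I.mkQ '' {x | ∃ S : Finset A, S.card = i ∧ x = E S})
      = Submodule.span k (Set.range v) := by
    apply le_antisymm
    · rw [Submodule.span_le]
      rintro y ⟨x, ⟨S, hScard, rfl⟩, rfl⟩
      rw [SetLike.mem_coe]
      by_cases hex : ∃ l, jn S l
      · obtain ⟨l, hSl⟩ := hex
        by_cases hrk : rk l = S.card
        · have heq : I.mkQ (E S) = v ⟨l, by rw [hrk, hScard]⟩ := hgood hSl hrk
          rw [heq]
          exact Submodule.subset_span ⟨_, rfl⟩
        · have h0' : I.mkQ (E S) = 0 := hmk0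
            (by rw [hgensdef]; exact Or.inl (Or.inr ⟨S, ⟨l, hSl, hrk⟩, rfl⟩))
          rw [h0']
          exact Submodule.zero_mem _
      · have h0' : I.mkQ (E S) = 0 := hmk0
          (by rw [hgensdef]; exact Or.inl (Or.inl ⟨S, hex, rfl⟩))
        rw [h0']
        exact Submodule.zero_mem _
    · rw [Submodule.span_le]
      rintro y ⟨l, rfl⟩
      exact Submodule.subset_span ⟨E (rep l.1), ⟨rep l.1, by rw [hrep2, l.2], rfl⟩, rfl⟩
  rw [hspans]
  have hvind : LinearIndependent k v := by
    rw [Fintype.linearIndependent_iff]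
    intro c hcsum l₀
    set z : ExteriorAlgebra k (A → k) := ∑ l : {l : L // rk l = i}, c l • E (rep l.1) with hzdef
    have hmkz : I.mkQ z = 0 := by
      rw [hzdef, map_sum]
      simpa [map_smul, hvdef] using hcsum
    have hzI : z ∈ I := by
      rwa [Submodule.mkQ_apply, Submodule.Quotient.mk_eq_zero] at hmkz
    have hphz : Φ z = 0 := LinearMap.mem_ker.mp (hIker hzI)
    have hfix : Φ z = z := by
      rw [hzdef, map_sum]
      refine Finset.sum_congr rfl fun l _ => ?_
      rw [map_smul, Φ_E, target_eq (hrep1 l.1) (hrep2 l.1).symm]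
    have hz0 : z = 0 := by rw [← hfix]; exact hphz
    have hcoef := congrArg (phiS (k := k) (rep l₀.1)) hz0
    rw [hzdef, map_sum, map_zero] at hcoef
    have hterm : ∀ l : {l : L // rk l = i},
        phiS (rep l₀.1) (c l • E (rep l.1)) = if l = l₀ then c l else 0 := by
      intro l
      rw [map_smul, phiS_E]
      by_cases h : l = l₀
      · subst h; rw [if_pos rfl, if_pos rfl]; simp
      · have hrepne : ¬ (rep l₀.1 = rep l.1) :=
          fun hcon => h (Subtype.ext (hrepinj _ _ hcon).symm)
        rw [if_neg hrepne, if_neg h]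
        simp
    rw [Finset.sum_congr rfl fun l _ => hterm l,
      Finset.sum_ite_eq' Finset.univ l₀ c, if_pos (Finset.mem_univ _)] at hcoef
    exact hcoef
  rw [finrank_span_eq_card hvind, Nat.card_eq_fintype_card]
  exact Fintype.card_congr (Equiv.refl _)

end EFR

/-- The exterior face ring of a finite ranked atomic geometric meet semi-lattice
`L` over a field of characteristic 2: the quotient of the exterior algebra on the
vector space spanned by the atoms of `L` by the ideal `I_L = I₁ + I₂ + I₃` has
`i`-th graded component of dimension equal to the number of rank-`i` elements of
`L`. -/
theorem exterior_face_ring_dims {L : Type*} [SemilatticeInf L] [OrderBot L]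
    [Fintype L] [DecidableEq L]
    (rk : L → ℕ) (h0 : rk ⊥ = 0) (hc : CoverRank rk) (hm : RankStrictMono rk)
    (hat : AtomicRk rk)
    (hgeo : ∀ x y j : L, IsLUB ({x, y} : Set L) j →
      rk (x ⊓ y) + rk j ≤ rk x + rk y)
    (k : Type*) [Field k] (hchar : ringChar k = 2) :
    ∀ i : ℕ,
      let A := {a : L // rk a = 1}
      let V := A → k
      -- `e S` is the wedge product of the basis vectors indexed by `S`
      let e : Finset A → ExteriorAlgebra k V := fun S =>
        (S.toList.map fun a => ExteriorAlgebra.ι k (Pi.single a (1 : k))).prod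
      -- `jn S l` : the join of the atoms in `S` exists in `L` and equals `l`
      let jn : Finset A → L → Prop := fun S l =>
        IsLUB (Subtype.val '' (↑S : Set A)) l
      let gens : Set (ExteriorAlgebra k V) :=
        {x | ∃ S : Finset A, (¬ ∃ l : L, jn S l) ∧ x = e S} ∪
        {x | ∃ S : Finset A, (∃ l : L, jn S l ∧ rk l ≠ S.card) ∧ x = e S} ∪
        {x | ∃ S T : Finset A, S ≠ T ∧
          (∃ l : L, jn S l ∧ jn T l ∧ rk l = S.card ∧ S.card = T.card) ∧
          x = e S - e T}
      -- the two-sided ideal generated by `gens`, as a `k`-subspace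
      let I : Submodule k (ExteriorAlgebra k V) :=
        Submodule.span k
          {x | ∃ g ∈ gens, ∃ w w' : ExteriorAlgebra k V, x = w * g * w'}
      Module.finrank k (Submodule.map I.mkQ
        ((LinearMap.range (ExteriorAlgebra.ι k : V →ₗ[k] ExteriorAlgebra k V)) ^ i)) =
        Nat.card {l : L | rk l = i} := by
  intro i
  exact EFR.main rk h0 hc hm hat hgeo k hchar i
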